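/- (Unconditional beam SINR distribution.) Let M ≥ 2 be an integer, let ρ, D > 0, and let G : (0,∞) → (0,∞) be a continuous, positive, nonincreasing function. Let R, E, S be mutually independent real random variables where R has cumulative distribution function r ↦ (r/D)² on [0, D], E has the exponential distribution with rate 1, and S has the Gamma distribution with shape M−1 and rate 1. Then for every x > 0, P( E / ( (ρ G(R))^{-1} + S ) ≤ x ) = 1 − (x+1)^{1−M} (1/D²) ∫_0^{D²} exp( −x / (G(√t) ρ) ) dt. -/

import Mathlib

open MeasureTheory ProbabilityTheory Real

open scoped ENNReal in
lemma map_R_eq {Ω : Type*} [MeasurableSpace Ω] (P : Measure Ω) [IsProbabilityMeasure P]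
    {D : ℝ} (hD : 0 < D) {R : Ω → ℝ} (hRm : Measurable R)
    (hR : ∀ r ∈ Set.Icc (0:ℝ) D, (P {ω | R ω ≤ r}).toReal = (r / D)^2) :
    P.map R = Measure.map Real.sqrt
      ((ENNReal.ofReal (1 / D^2)) • volume.restrict (Set.Ioc 0 (D^2))) := by
  have hPR : ∀ r, P.map R (Set.Iic r) = P {ω | R ω ≤ r} := fun r => by
    rw [Measure.map_apply hRm measurableSet_Iic]; rfl
  have hfin : ∀ r, P {ω | R ω ≤ r} ≠ ⊤ := fun r => measure_ne_top _ _
  have hval : ∀ r ∈ Set.Icc (0:ℝ) D, P {ω | R ω ≤ r} = ENNReal.ofReal ((r/D)^2) := by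
    intro r hr
    rw [← hR r hr, ENNReal.ofReal_toReal (hfin r)]
  have h0 : P {ω | R ω ≤ 0} = 0 := by
    have := hval 0 ⟨le_refl _, hD.le⟩
    simpa using this
  have hD2 : (0:ℝ) < D^2 := by positivity
  haveI : IsProbabilityMeasure (P.map R) := Measure.isProbabilityMeasure_map hRm.aemeasurable
  have hsqrtm : Measurable Real.sqrt := Real.continuous_sqrt.measurable
  refine MeasureTheory.Measure.ext_of_Iic _ _ (fun a => ?_)
  rw [hPR, Measure.map_apply hsqrtm measurableSet_Iic, Measure.smul_apply,
    Measure.restrict_apply (hsqrtm measurableSet_Iic)]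
  rcases lt_or_ge a 0 with ha | ha
  · have hempty : Real.sqrt ⁻¹' Set.Iic a = ∅ := by
      ext t; simp only [Set.mem_preimage, Set.mem_Iic, Set.mem_empty_iff_false, iff_false, not_le]
      exact lt_of_lt_of_le ha (Real.sqrt_nonneg t)
    have : P {ω | R ω ≤ a} = 0 :=
      measure_mono_null (fun ω (h : R ω ≤ a) => le_trans h ha.le) h0
    rw [this, hempty]; simp
  · have hset : Real.sqrt ⁻¹' Set.Iic a ∩ Set.Ioc 0 (D^2) = Set.Ioc 0 (min (a^2) (D^2)) := by
      ext t
      simp only [Set.mem_inter_iff, Set.mem_preimage, Set.mem_Iic, Set.mem_Ioc, le_min_iff]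
      constructor
      · rintro ⟨h1, h2, h3⟩
        refine ⟨h2, ?_, h3⟩
        exact (Real.sqrt_le_iff.mp h1).2
      · rintro ⟨h2, h3, h4⟩
        exact ⟨Real.sqrt_le_iff.mpr ⟨ha, h3⟩, h2, h4⟩
    rw [hset, Real.volume_Ioc]
    rcases le_or_gt a D with haD | haD
    · have hmin : min (a^2) (D^2) = a^2 := min_eq_left (by nlinarith)
      rw [hval a ⟨ha, haD⟩, hmin]
      rw [smul_eq_mul, sub_zero, ← ENNReal.ofReal_mul (by positivity)]
      congr 1
      rw [div_pow]
      ring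
    · have hmin : min (a^2) (D^2) = D^2 := min_eq_right (by nlinarith)
      have h1 : P {ω | R ω ≤ a} = 1 := by
        refine le_antisymm prob_le_one ?_
        calc (1:ENNReal) = P {ω | R ω ≤ D} := by
              rw [hval D ⟨hD.le, le_refl D⟩]; simp [div_self hD.ne']
          _ ≤ P {ω | R ω ≤ a} := measure_mono (fun ω (h : R ω ≤ D) => le_trans h haD.le)
      rw [h1, hmin, smul_eq_mul, sub_zero, ← ENNReal.ofReal_mul (by positivity)]
      rw [one_div, inv_mul_cancel₀ (ne_of_gt hD2)]
      simp

lemma gamma_laplace {a : ℝ} (ha : 0 < a) {x : ℝ} (hx : 0 < x) :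
    ∫ s, Real.exp (-(x * s)) ∂(gammaMeasure a 1) = (x + 1) ^ (-a) := by
  have hx1 : (0:ℝ) < x + 1 := by linarith
  have hcont : Measurable fun s : ℝ => Real.exp (-(x * s)) :=
    ((measurable_id.const_mul x).neg).exp
  rw [integral_eq_lintegral_of_nonneg_ae (ae_of_all _ fun s => (Real.exp_pos _).le)
    hcont.aestronglyMeasurable]
  have hpoint : ∀ s : ℝ, gammaPDF a 1 s * ENNReal.ofReal (Real.exp (-(x * s)))
      = ENNReal.ofReal ((x+1) ^ (-a)) * gammaPDF a (x+1) s := by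
    intro s
    rcases le_or_gt 0 s with hs | hs
    · rw [gammaPDF_of_nonneg hs, gammaPDF_of_nonneg hs,
        ← ENNReal.ofReal_mul (by positivity), ← ENNReal.ofReal_mul (by positivity)]
      congr 1
      have hexp : rexp (-(1*s)) * rexp (-(x*s)) = rexp (-((x+1)*s)) := by
        rw [← Real.exp_add]; ring_nf
      have h1 : (x+1:ℝ)^(-a) * (x+1)^a = 1 := by
        rw [← Real.rpow_add hx1]; simp
      rw [one_rpow]
      linear_combination (1 / Gamma a * s^(a-1)) * hexp
        - (1 / Gamma a * s^(a-1) * rexp (-((x+1)*s))) * h1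
    · rw [gammaPDF_of_neg hs, gammaPDF_of_neg hs, zero_mul, mul_zero]
  simp only [gammaMeasure]
  have hpdfm : Measurable (gammaPDF a 1) := (measurable_gammaPDFReal a 1).ennreal_ofReal
  have hpdfm2 : Measurable (gammaPDF a (x+1)) := (measurable_gammaPDFReal a (x+1)).ennreal_ofReal
  rw [MeasureTheory.lintegral_withDensity_eq_lintegral_mul _ hpdfm hcont.ennreal_ofReal]
  simp only [Pi.mul_apply]
  simp only [hpoint]
  rw [lintegral_const_mul _ hpdfm2, lintegral_gammaPDF_eq_one ha hx1, mul_one,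
    ENNReal.toReal_ofReal (by positivity)]

lemma expMeasure_Iic (c : ℝ) :
    expMeasure 1 (Set.Iic c) = ENNReal.ofReal (if 0 ≤ c then 1 - rexp (-c) else 0) := by
  have h : expMeasure 1 (Set.Iic c) = ∫⁻ y in Set.Iic c, exponentialPDF 1 y := by
    rw [expMeasure, gammaMeasure, withDensity_apply _ measurableSet_Iic]; rfl
  rw [h, lintegral_exponentialPDF_eq_antiDeriv zero_lt_one c]
  simp


/-- Unconditional beam SINR distribution: with `R` the user distance (CDF `(r/D)²` on
`[0,D]`), `E ~ Exp(1)` signal power and `S ~ Gamma(M-1,1)` interference power, mutually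
independent, the SINR `E / ((ρ G(R))⁻¹ + S)` has CDF
`1 - (x+1)^{1-M} (1/D²) ∫₀^{D²} exp(-x/(G(√t)ρ)) dt` at every `x > 0`. -/
theorem beam_sinr_cdf_unconditional
    {Ω : Type*} [MeasurableSpace Ω] (P : Measure Ω) [IsProbabilityMeasure P]
    (M : ℕ) (hM : 2 ≤ M) (ρ D : ℝ) (hρ : 0 < ρ) (hD : 0 < D)
    (G : ℝ → ℝ) (hGpos : ∀ d, 0 < d → 0 < G d)
    (hGcont : ContinuousOn G (Set.Ioi 0)) (hGanti : AntitoneOn G (Set.Ioi 0))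
    (R E S : Ω → ℝ)
    (hRm : Measurable R) (hEm : Measurable E) (hSm : Measurable S)
    (hindep : iIndepFun ![R, E, S] P)
    (hR : ∀ r ∈ Set.Icc (0 : ℝ) D, (P {ω | R ω ≤ r}).toReal = (r / D) ^ 2)
    (hE : P.map E = expMeasure 1)
    (hS : P.map S = gammaMeasure ((M : ℝ) - 1) 1) :
    ∀ x : ℝ, 0 < x →
      (P {ω | E ω / ((ρ * G (R ω))⁻¹ + S ω) ≤ x}).toReal
        = 1 - (x + 1) ^ ((1 : ℝ) - M) * (1 / D ^ 2) *
            ∫ t in (0 : ℝ)..(D ^ 2), Real.exp (-x / (G (Real.sqrt t) * ρ)) := by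
  intro x hx
  classical
  have hD2 : (0:ℝ) < D ^ 2 := by positivity
  have ha : (0:ℝ) < (M:ℝ) - 1 := by
    have : (2:ℝ) ≤ M := by exact_mod_cast hM
    linarith
  -- measurable modification of G
  set G' : ℝ → ℝ := (Set.Ioi (0:ℝ)).piecewise G 1 with hG'def
  have hG'meas : Measurable G' :=
    hGcont.measurable_piecewise continuousOn_const measurableSet_Ioi
  have hG'eq : ∀ r : ℝ, 0 < r → G' r = G r := fun r hr =>
    Set.piecewise_eq_of_mem _ _ _ hr
  have hG'pos : ∀ r : ℝ, 0 < r → 0 < G' r := fun r hr => (hG'eq r hr).symm ▸ hGpos r hr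
  -- a.e. positivity facts
  have hR0 : P {ω | R ω ≤ 0} = 0 := by
    have h := hR 0 ⟨le_refl _, hD.le⟩
    have h2 := (ENNReal.toReal_eq_zero_iff _).mp (by simpa using h)
    exact h2.resolve_right (measure_ne_top _ _)
  have hRae : ∀ᵐ ω ∂P, 0 < R ω := by
    rw [ae_iff]
    simpa [not_lt] using hR0
  have hSae : ∀ᵐ ω ∂P, 0 ≤ S ω := by
    rw [ae_iff]
    have h1 : P {ω | S ω < 0} = (P.map S) (Set.Iio 0) := by
      rw [Measure.map_apply hSm measurableSet_Iio]; rfl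
    simp only [not_le]
    rw [h1, hS, gammaMeasure, withDensity_apply _ measurableSet_Iio]
    exact lintegral_gammaPDF_of_nonpos le_rfl
  -- independence
  have hmf : ∀ i, Measurable (![R, E, S] i) := by
    intro i; fin_cases i <;> simpa
  have hRS : IndepFun R S P := hindep.indepFun (show (0:Fin 3) ≠ 2 by decide)
  have hRS_E : IndepFun (fun ω => (R ω, S ω)) E P :=
    hindep.indepFun_prodMk hmf 0 2 1 (by decide) (by decide)
  have hmapRS : P.map (fun ω => (R ω, S ω)) = (P.map R).prod (P.map S) :=
    (indepFun_iff_map_prod_eq_prod_map_map hRm.aemeasurable hSm.aemeasurable).mp hRS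
  have hmapAll : P.map (fun ω => ((R ω, S ω), E ω))
      = ((P.map R).prod (P.map S)).prod (P.map E) := by
    rw [← hmapRS]
    exact (indepFun_iff_map_prod_eq_prod_map_map (hRm.prodMk hSm).aemeasurable
      hEm.aemeasurable).mp hRS_E
  haveI : IsProbabilityMeasure (P.map E) := by
    rw [hE]; exact isProbabilityMeasure_expMeasure one_pos
  haveI : IsProbabilityMeasure (P.map S) := by
    rw [hS]; exact isProbabilityMeasure_gammaMeasure ha one_pos
  haveI : IsProbabilityMeasure (P.map R) := Measure.isProbabilityMeasure_map hRm.aemeasurable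
  set μRS : Measure (ℝ × ℝ) := (P.map R).prod (P.map S) with hμRSdef
  -- the function in the event
  set h : ℝ × ℝ → ℝ := fun p => (ρ * G' p.1)⁻¹ + p.2 with hhdef
  have hhm : Measurable h := ((hG'meas.comp measurable_fst).const_mul ρ).inv.add measurable_snd
  have hBmeas : MeasurableSet {p : (ℝ × ℝ) × ℝ | p.2 ≤ x * h p.1} :=
    measurableSet_le measurable_snd ((hhm.comp measurable_fst).const_mul x)
  -- rewrite the event
  have hevent : P {ω | E ω / ((ρ * G (R ω))⁻¹ + S ω) ≤ x}
      = P {ω | E ω ≤ x * h (R ω, S ω)} := by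
    apply measure_congr
    rw [Filter.eventuallyEq_set]
    filter_upwards [hRae, hSae] with ω hr hs
    have hd : 0 < (ρ * G (R ω))⁻¹ + S ω := by
      have hg := hGpos _ hr
      positivity
    simp only [Set.mem_setOf_eq, hhdef, hG'eq _ hr]
    rw [div_le_iff₀ hd]
  -- push to the product measure
  have hPmap : P {ω | E ω ≤ x * h (R ω, S ω)}
      = (μRS.prod (P.map E)) {p : (ℝ × ℝ) × ℝ | p.2 ≤ x * h p.1} := by
    rw [hμRSdef, ← hmapAll,
      Measure.map_apply ((hRm.prodMk hSm).prodMk hEm) hBmeas]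
    rfl
  have hprod : (μRS.prod (P.map E)) {p : (ℝ × ℝ) × ℝ | p.2 ≤ x * h p.1}
      = ∫⁻ p, (P.map E) (Set.Iic (x * h p)) ∂μRS := by
    rw [Measure.prod_apply hBmeas]
    rfl
  -- a.e. facts on the product
  have hμR0 : (P.map R) {r : ℝ | r ≤ 0} = 0 := by
    show (P.map R) (Set.Iic 0) = 0
    rw [Measure.map_apply hRm measurableSet_Iic]
    exact hR0
  have hμS0 : (P.map S) {s : ℝ | s < 0} = 0 := by
    show (P.map S) (Set.Iio 0) = 0
    rw [hS, gammaMeasure, withDensity_apply _ measurableSet_Iio]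
    exact lintegral_gammaPDF_of_nonpos le_rfl
  have hRSae : ∀ᵐ p ∂μRS, 0 < p.1 ∧ 0 ≤ p.2 := by
    rw [ae_iff]
    refine measure_mono_null (t := ({r : ℝ | r ≤ 0} ×ˢ Set.univ) ∪
      (Set.univ ×ˢ {s : ℝ | s < 0})) ?_ ?_
    · intro p hp
      simp only [Set.mem_setOf_eq, not_and_or, not_lt, not_le] at hp
      rcases hp with hp | hp
      · exact Or.inl ⟨hp, trivial⟩
      · exact Or.inr ⟨trivial, hp⟩
    · refine measure_union_null ?_ ?_
      · rw [hμRSdef, Measure.prod_prod, hμR0, zero_mul]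
      · rw [hμRSdef, Measure.prod_prod, hμS0, mul_zero]
  have hhael : ∀ p : ℝ × ℝ, 0 < p.1 ∧ 0 ≤ p.2 → 0 ≤ h p := by
    rintro p ⟨hp1, hp2⟩
    have hg := hG'pos p.1 hp1
    have : 0 ≤ (ρ * G' p.1)⁻¹ := by positivity
    simp only [hhdef]
    linarith
  -- exponential CDF
  set f : ℝ × ℝ → ℝ := fun p => 1 - rexp (-(x * h p)) with hfdef
  have hfm : Measurable f := measurable_const.sub ((hhm.const_mul x).neg.exp)
  have hlint : ∫⁻ p, (P.map E) (Set.Iic (x * h p)) ∂μRS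
      = ∫⁻ p, ENNReal.ofReal (f p) ∂μRS := by
    refine lintegral_congr_ae ?_
    filter_upwards [hRSae] with p hp
    have hh0 : 0 ≤ h p := hhael p hp
    have hc : 0 ≤ x * h p := mul_nonneg hx.le hh0
    rw [hE, expMeasure_Iic, if_pos hc]
  have hfnn : 0 ≤ᵐ[μRS] f := by
    filter_upwards [hRSae] with p hp
    have hc : 0 ≤ x * h p := mul_nonneg hx.le (hhael p hp)
    simp only [hfdef, Pi.zero_apply, sub_nonneg]
    exact Real.exp_le_one_iff.mpr (by linarith)
  have hkey : (P {ω | E ω / ((ρ * G (R ω))⁻¹ + S ω) ≤ x}).toReal = ∫ p, f p ∂μRS := by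
    rw [hevent, hPmap, hprod, hlint,
      ← integral_eq_lintegral_of_nonneg_ae hfnn hfm.aestronglyMeasurable]
  -- split the constant
  have hint_exp : Integrable (fun p : ℝ × ℝ => rexp (-(x * h p))) μRS := by
    refine Integrable.mono' (integrable_const 1)
      ((hhm.const_mul x).neg.exp).aestronglyMeasurable ?_
    filter_upwards [hRSae] with p hp
    have hc : 0 ≤ x * h p := mul_nonneg hx.le (hhael p hp)
    rw [Real.norm_eq_abs, abs_of_pos (Real.exp_pos _)]
    exact Real.exp_le_one_iff.mpr (by linarith)
  have hsplit : ∫ p, f p ∂μRS = 1 - ∫ p, rexp (-(x * h p)) ∂μRS := by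
    simp only [hfdef]
    rw [integral_sub (integrable_const 1) hint_exp, integral_const]
    simp
  -- factorize over the product
  have hfact : ∫ p, rexp (-(x * h p)) ∂μRS
      = (∫ r, rexp (-(x * (ρ * G' r)⁻¹)) ∂(P.map R)) * (∫ s, rexp (-(x * s)) ∂(P.map S)) := by
    rw [hμRSdef, ← integral_prod_mul]
    refine integral_congr_ae (ae_of_all _ fun p => ?_)
    simp only [hhdef]
    rw [← Real.exp_add]
    ring_nf
  -- the gamma factor
  have hI2 : ∫ s, rexp (-(x * s)) ∂(P.map S) = (x + 1) ^ (-((M:ℝ) - 1)) := by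
    rw [hS]; exact gamma_laplace ha hx
  -- the R factor
  have hexpGm : Measurable fun r : ℝ => rexp (-(x * (ρ * G' r)⁻¹)) :=
    (((hG'meas.const_mul ρ).inv.const_mul x).neg).exp
  have hI1 : ∫ r, rexp (-(x * (ρ * G' r)⁻¹)) ∂(P.map R)
      = (1 / D ^ 2) * ∫ t in Set.Ioc (0:ℝ) (D^2), rexp (-x / (G (Real.sqrt t) * ρ)) := by
    rw [map_R_eq P hD hRm hR,
      integral_map Real.continuous_sqrt.aemeasurable hexpGm.aestronglyMeasurable,
      integral_smul_measure, ENNReal.toReal_ofReal (by positivity)]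
    rw [smul_eq_mul]
    congr 1
    refine setIntegral_congr_fun measurableSet_Ioc (fun t ht => ?_)
    have hst : 0 < Real.sqrt t := Real.sqrt_pos.mpr ht.1
    have hg := hGpos _ hst
    rw [hG'eq _ hst,
      show -x / (G (Real.sqrt t) * ρ) = -(x * (ρ * G (Real.sqrt t))⁻¹) by
        rw [mul_comm (G (Real.sqrt t)) ρ, div_eq_mul_inv]; ring]
  rw [hkey, hsplit, hfact, hI1, hI2, intervalIntegral.integral_of_le hD2.le]
  have hpow : (-((M:ℝ) - 1)) = (1:ℝ) - M := by ring
  rw [hpow]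
  ring
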